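/- Let k be an algebraically closed field of characteristic 2 and let f ∈ k[x] with deg f ≤ 6. Then there exists a polynomial u ∈ k[x] with deg u ≤ 3 such that f + (x²+x)·u + u² = c1·x + c3·x³ + c5·x⁵ for some c1,c3,c5 ∈ k. (This reduces a curve y² + (x²+x)y = f(x) to the normal form y² + (x²+x)y = f1x + f3x³ + f5x⁵.) -/

import Mathlib

open Polynomial in
theorem normal_form_h_x_sq_add_x {k : Type*} [Field k] [IsAlgClosed k] [CharP k 2]
    (f : k[X]) (hf : f.degree ≤ 6) :
    ∃ u : k[X], u.degree ≤ 3 ∧ ∃ c1 c3 c5 : k,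
      f + (X^2 + X) * u + u^2 = C c1 * X + C c3 * X^3 + C c5 * X^5 := by
  have h2k : (2 : k) = 0 := by
    have := CharP.cast_eq_zero k 2; exact_mod_cast this
  have h2p : (2 : k[X]) = 0 := by
    have := CharP.cast_eq_zero k[X] 2; exact_mod_cast this
  -- Artin–Schreier style roots
  have AS : ∀ c : k, ∃ a : k, a^2 + a = c := by
    intro c
    obtain ⟨a, ha⟩ := IsAlgClosed.exists_root (X^2 + X - C c : k[X]) (by
      intro h
      have : (X^2 + X - C c : k[X]).degree = 2 := by compute_degree!
      rw [h] at this; simp at this)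
    refine ⟨a, ?_⟩
    have := ha
    rw [Polynomial.IsRoot, Polynomial.eval_sub, Polynomial.eval_add, Polynomial.eval_pow,
      Polynomial.eval_X, Polynomial.eval_C, sub_eq_zero] at this
    exact this
  set b0 := f.coeff 0
  set b1 := f.coeff 1
  set b2 := f.coeff 2
  set b3 := f.coeff 3
  set b4 := f.coeff 4
  set b5 := f.coeff 5
  set b6 := f.coeff 6
  obtain ⟨a0, ha0⟩ := IsAlgClosed.exists_pow_nat_eq b0 (n:=2) (by norm_num)
  obtain ⟨a3, ha3⟩ := IsAlgClosed.exists_pow_nat_eq b6 (n:=2) (by norm_num)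
  obtain ⟨a1, ha1⟩ := AS (b2 + a0)
  obtain ⟨a2, ha2⟩ := AS (b4 + a3)
  have hb0 : b0 = a0^2 := ha0.symm
  have hb6 : b6 = a3^2 := ha3.symm
  have hb2 : b2 = a1^2 + a1 + a0 := by linear_combination -ha1 - a0 * h2k
  have hb4 : b4 = a2^2 + a2 + a3 := by linear_combination -ha2 - a3 * h2k
  have hnd : f.natDegree < 7 := by
    have h6 : f.natDegree ≤ 6 := Polynomial.natDegree_le_iff_degree_le.2 (by exact_mod_cast hf)
    omega
  have hfe : f = C b0 + C b1 * X + C b2 * X^2 + C b3 * X^3 + C b4 * X^4 + C b5 * X^5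
      + C b6 * X^6 := by
    conv_lhs => rw [f.as_sum_range' 7 hnd]
    simp [Finset.sum_range_succ, ← Polynomial.C_mul_X_pow_eq_monomial]
    rfl
  refine ⟨C a0 + C a1 * X + C a2 * X^2 + C a3 * X^3, ?_, b1 + a0, b3 + a1 + a2, b5 + a3, ?_⟩
  · compute_degree
  · rw [hfe, hb0, hb2, hb4, hb6]
    simp only [map_add, map_pow, map_mul]
    linear_combination (C a0^2 + C a0 * C a1 * X + (C a1^2 + C a1 + C a0 + C a0 * C a2) * X^2
      + (C a0 * C a3 + C a1 * C a2) * X^3 + (C a2^2 + C a2 + C a3 + C a1 * C a3) * X^4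
      + C a2 * C a3 * X^5 + C a3^2 * X^6) * h2p
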